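/- If H is a block of a connected graph G and u, v are distinct vertices of H, then every edge-cut of G separating u and v contains an edge-cut of H separating u and v, and λ_H(u,v) = λ_G(u,v). -/

import Mathlib

open SimpleGraph

/-- `F` is an edge-cut of `G` separating `u` and `v`. -/
def CutsBetween {V : Type*} (G : SimpleGraph V) (u v : V) (F : Finset (Sym2 V)) : Prop :=
  ↑F ⊆ G.edgeSet ∧ ¬ (G.deleteEdges ↑F).Reachable u v

/-- `lam G u v` is the minimum number of edges in an edge-cut of `G` separating `u` and `v`. -/
noncomputable def lam {V : Type*} (G : SimpleGraph V) (u v : V) : ℕ :=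
  sInf {n | ∃ F : Finset (Sym2 V), CutsBetween G u v F ∧ F.card = n}

/-- `c` is a strong rainbow disconnection coloring of `G`: every pair of distinct vertices
admits a rainbow minimum edge-cut separating them. -/
def IsSRDColoring {V : Type*} (G : SimpleGraph V) (c : Sym2 V → ℕ) : Prop :=
  ∀ u v : V, u ≠ v → ∃ F : Finset (Sym2 V),
    CutsBetween G u v F ∧ F.card = lam G u v ∧ Set.InjOn c ↑F

/-- The strong rainbow disconnection number of `G`. -/
noncomputable def srd {V : Type*} (G : SimpleGraph V) : ℕ :=
  sInf {k | ∃ c : Sym2 V → ℕ, (∀ e ∈ G.edgeSet, c e < k) ∧ IsSRDColoring G c}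

/-- `B` is a block of `G`: a maximal connected subgraph without cut-vertices. -/
def IsBlock {V : Type*} (G : SimpleGraph V) (B : G.Subgraph) : Prop :=
  B.verts.Nonempty ∧ B.coe.Connected ∧
  (∀ v : B.verts, (B.coe.induce {w | w ≠ v}).Preconnected) ∧
  ∀ B' : G.Subgraph, B ≤ B' → B'.coe.Connected →
    (∀ v : B'.verts, (B'.coe.induce {w | w ≠ v}).Preconnected) → B = B'

/-- `H` is a cycle graph: connected and 2-regular. -/
def IsCycleGraph {W : Type*} (H : SimpleGraph W) : Prop :=
  H.Connected ∧ ∀ v : W, Nat.card (H.neighborSet v) = 2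

section Helpers

variable {V : Type*}

lemma reach_del {G : SimpleGraph V} (B : G.Subgraph) (S : Set (Sym2 B.verts)) :
    ∀ {a b : V} (q : G.Walk a b), q.toSubgraph ≤ B → ∀ (ha : a ∈ B.verts) (hb : b ∈ B.verts),
    (∀ e ∈ q.edges, ∀ e' ∈ S, Sym2.map (Subtype.val) e' ≠ e) →
    (B.coe.deleteEdges S).Reachable ⟨a, ha⟩ ⟨b, hb⟩ := by
  intro a b q
  induction q with
  | nil => intro _ ha hb _; rfl
  | cons h q ih =>
    rename_i x c y
    intro hq ha hb hS
    have hBadj : B.Adj x c := by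
      apply hq.2
      simp [Walk.toSubgraph]
    have hc : c ∈ B.verts := B.edge_vert hBadj.symm
    have hq' : q.toSubgraph ≤ B := le_trans le_sup_right hq
    have hstep : (B.coe.deleteEdges S).Adj ⟨x, ha⟩ ⟨c, hc⟩ := by
      rw [deleteEdges_adj]
      refine ⟨by simpa using hBadj, fun hmem => ?_⟩
      exact hS s(x, c) (by simp) s(⟨x, ha⟩, ⟨c, hc⟩) hmem (by simp)
    exact hstep.reachable.trans (ih hq' hc hb (fun e he => hS e (by simp [he])))


lemma reach_ind {G : SimpleGraph V} (B : G.Subgraph) (t : B.verts) :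
    ∀ {a b : V} (q : G.Walk a b), q.toSubgraph ≤ B → ∀ (ha : a ∈ B.verts) (hb : b ∈ B.verts),
    (∀ x ∈ q.support, x ≠ (t : V)) →
    ∀ (ha' : (⟨a, ha⟩ : B.verts) ∈ {w : B.verts | w ≠ t})
      (hb' : (⟨b, hb⟩ : B.verts) ∈ {w : B.verts | w ≠ t}),
    (B.coe.induce {w | w ≠ t}).Reachable ⟨⟨a, ha⟩, ha'⟩ ⟨⟨b, hb⟩, hb'⟩ := by
  intro a b q
  induction q with
  | nil => intro _ ha hb _ _ _; rfl
  | cons h q ih =>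
    rename_i x c y
    intro hq ha hb hT ha' hb'
    have hBadj : B.Adj x c := by
      apply hq.2
      simp [Walk.toSubgraph]
    have hc : c ∈ B.verts := B.edge_vert hBadj.symm
    have hq' : q.toSubgraph ≤ B := le_trans le_sup_right hq
    have hcne : c ≠ (t : V) := hT c (by simp)
    have hc' : (⟨c, hc⟩ : B.verts) ∈ {w : B.verts | w ≠ t} := by
      simp only [Set.mem_setOf_eq]
      exact fun hh => hcne (congrArg Subtype.val hh)
    have hstep : (B.coe.induce {w : B.verts | w ≠ t}).Adj ⟨⟨x, ha⟩, ha'⟩ ⟨⟨c, hc⟩, hc'⟩ := by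
      simp only [comap_adj, Function.Embedding.coe_subtype, Subgraph.coe_adj]
      exact hBadj
    exact hstep.reachable.trans (ih hq' hc hb (fun z hz => hT z (by simp [hz])) hc' hb')

lemma reach_ind2 {G : SimpleGraph V} {B H : G.Subgraph} (hle : H ≤ B) (t : B.verts)
    (ht : (t : V) ∉ H.verts) :
    ∀ {x y : H.verts} (q : H.coe.Walk x y),
    (B.coe.induce {w : B.verts | w ≠ t}).Reachable
      ⟨⟨x, hle.1 x.2⟩, fun hh => ht (congrArg Subtype.val hh ▸ x.2)⟩
      ⟨⟨y, hle.1 y.2⟩, fun hh => ht (congrArg Subtype.val hh ▸ y.2)⟩ := by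
  intro x y q
  induction q with
  | nil => rfl
  | cons h q ih =>
    rename_i a c b
    have hstep : (B.coe.induce {w : B.verts | w ≠ t}).Adj
        ⟨⟨a, hle.1 a.2⟩, fun hh => ht (congrArg Subtype.val hh ▸ a.2)⟩
        ⟨⟨c, hle.1 c.2⟩, fun hh => ht (congrArg Subtype.val hh ▸ c.2)⟩ := by
      simp only [comap_adj, Function.Embedding.coe_subtype, Subgraph.coe_adj]
      exact hle.2 (by simpa using h)
    exact hstep.reachable.trans ih

lemma path_le_block [DecidableEq V] {G : SimpleGraph V} {H : G.Subgraph} (hH : IsBlock G H)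
    {a b : V} (ha : a ∈ H.verts) (hb : b ∈ H.verts)
    (P : G.Walk a b) (hP : P.IsPath) : P.toSubgraph ≤ H := by
  set B' := H ⊔ P.toSubgraph with hB'
  have hle : H ≤ B' := le_sup_left
  have hconn : B'.coe.Connected := by
    have h1 : H.Connected := ⟨hH.2.1⟩
    have h2 : P.toSubgraph.Connected := P.toSubgraph_connected
    have h3 := Subgraph.connected_sup h1.preconnected h2.preconnected
      ⟨a, by rw [Subgraph.verts_inf]; exact ⟨ha, P.start_mem_verts_toSubgraph⟩⟩
    exact h3.coe
  have hcut : ∀ t : B'.verts, (B'.coe.induce {w | w ≠ t}).Preconnected := by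
    intro t x y
    have claimA : ∀ z : {w : B'.verts | w ≠ t}, ∃ w : {w : B'.verts | w ≠ t},
        ((w : B'.verts) : V) ∈ H.verts ∧ (B'.coe.induce {w | w ≠ t}).Reachable z w := by
      intro z
      have hzB : ((z : B'.verts) : V) ∈ H.verts ∪ P.toSubgraph.verts := by
        rw [← Subgraph.verts_sup]; exact (z : B'.verts).2
      have hzt : ((z : B'.verts) : V) ≠ (t : V) := fun h => z.2 (Subtype.ext h)
      cases hzB with
      | inl h => exact ⟨z, h, Reachable.refl _⟩
      | inr h =>
        have hs : ((z : B'.verts) : V) ∈ P.support := (P.mem_verts_toSubgraph).mp h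
        have hdecomp : P.toSubgraph
            = (P.takeUntil _ hs).toSubgraph ⊔ (P.dropUntil _ hs).toSubgraph := by
          conv_lhs => rw [← P.take_spec hs]
          rw [Walk.toSubgraph_append]
        by_cases htk : (t : V) ∈ (P.takeUntil _ hs).support
        · -- t is in the take part; use drop to reach b
          have hnd := hP.support_nodup
          have hre : P.support
              = (P.takeUntil _ hs).support ++ (P.dropUntil _ hs).support.tail := by
            conv_lhs => rw [← P.take_spec hs]
            rw [Walk.support_append]
          rw [hre] at hnd
          have hdisj := List.disjoint_of_nodup_append hnd
          have hdt : (t : V) ∉ (P.dropUntil _ hs).support := by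
            intro hmem
            rw [Walk.support_eq_cons, List.mem_cons] at hmem
            rcases hmem with hmem | hmem
            · exact hzt hmem.symm
            · exact hdisj htk hmem
          have hq : (P.dropUntil _ hs).toSubgraph ≤ B' :=
            le_trans (hdecomp ▸ le_sup_right) le_sup_right
          have hbB : b ∈ B'.verts := hle.1 hb
          have hbt : b ≠ (t : V) := fun hh => hdt (hh ▸ (P.dropUntil _ hs).end_mem_support)
          have hr := reach_ind B' t (P.dropUntil _ hs) hq (z : B'.verts).2 hbB
            (fun w hw hh => hdt (hh ▸ hw))
            (fun hh => z.2 (Subtype.ext (congrArg Subtype.val hh)))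
            (fun hh => hbt (congrArg Subtype.val hh))
          refine ⟨⟨⟨b, hbB⟩, fun hh => hbt (congrArg Subtype.val hh)⟩, hb, ?_⟩
          convert hr using 1 <;> exact Subtype.ext (Subtype.ext rfl)
        · -- t not in take; reverse take to reach a
          have hq : (P.takeUntil _ hs).reverse.toSubgraph ≤ B' := by
            rw [Walk.toSubgraph_reverse]
            exact le_trans (hdecomp ▸ le_sup_left) le_sup_right
          have haB : a ∈ B'.verts := hle.1 ha
          have hat : a ≠ (t : V) := fun hh => htk (hh ▸ (P.takeUntil _ hs).start_mem_support)
          have hr := reach_ind B' t (P.takeUntil _ hs).reverse hq (z : B'.verts).2 haB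
            (fun w hw hh => htk (by rw [Walk.support_reverse] at hw; exact hh ▸ (List.mem_reverse.mp hw)))
            (fun hh => z.2 (Subtype.ext (congrArg Subtype.val hh)))
            (fun hh => hat (congrArg Subtype.val hh))
          refine ⟨⟨⟨a, haB⟩, fun hh => hat (congrArg Subtype.val hh)⟩, ha, ?_⟩
          convert hr using 1 <;> exact Subtype.ext (Subtype.ext rfl)
    have claimB : ∀ (z w : {w : B'.verts | w ≠ t}), ((z : B'.verts) : V) ∈ H.verts →
        ((w : B'.verts) : V) ∈ H.verts →
        (B'.coe.induce {w | w ≠ t}).Reachable z w := by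
      intro z w hz hw
      by_cases ht : ((t : B'.verts) : V) ∈ H.verts
      · set t' : H.verts := ⟨(t : V), ht⟩ with ht'
        have hzne : (⟨((z : B'.verts) : V), hz⟩ : H.verts) ∈ {w : H.verts | w ≠ t'} :=
          fun hh => z.2 (Subtype.ext (congrArg (fun (p : H.verts) => (p : V)) hh))
        have hwne : (⟨((w : B'.verts) : V), hw⟩ : H.verts) ∈ {w : H.verts | w ≠ t'} :=
          fun hh => w.2 (Subtype.ext (congrArg (fun (p : H.verts) => (p : V)) hh))
        have hr := hH.2.2.1 t' ⟨⟨_, hz⟩, hzne⟩ ⟨⟨_, hw⟩, hwne⟩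
        let φ : (H.coe.induce {w : H.verts | w ≠ t'}) →g (B'.coe.induce {w : B'.verts | w ≠ t}) :=
          { toFun := fun p => ⟨⟨(p : H.verts), hle.1 (p : H.verts).2⟩,
              fun hh => p.2 (Subtype.ext (congrArg (fun (q : B'.verts) => (q : V)) hh))⟩,
            map_rel' := by
              intro p q hpq
              simp only [comap_adj, Function.Embedding.coe_subtype, Subgraph.coe_adj] at hpq ⊢
              exact hle.2 hpq }
        have hmap := hr.map φ
        convert hmap using 1 <;> exact Subtype.ext (Subtype.ext rfl)
      · obtain ⟨q⟩ := hH.2.1.preconnected ⟨_, hz⟩ ⟨_, hw⟩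
        have hr := reach_ind2 hle t ht q
        convert hr using 1 <;> exact Subtype.ext (Subtype.ext rfl)
    obtain ⟨zx, hzx, hrx⟩ := claimA x
    obtain ⟨zy, hzy, hry⟩ := claimA y
    exact hrx.trans ((claimB zx zy hzx hzy).trans hry.symm)
  have heq := hH.2.2.2 B' hle hconn hcut
  rw [heq, hB']
  exact le_sup_right

end Helpers

theorem stmt17 {V : Type*} [Fintype V] [DecidableEq V] (G : SimpleGraph V)
    (hG : G.Connected) (H : G.Subgraph) (hH : IsBlock G H)
    (u v : H.verts) (huv : u ≠ v) :
    (∀ F : Finset (Sym2 V), CutsBetween G ↑u ↑v F →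
      ∃ F' : Finset (Sym2 H.verts), CutsBetween H.coe u v F' ∧
        F'.image (Sym2.map (Subtype.val : H.verts → V)) ⊆ F) ∧
    lam H.coe u v = lam G ↑u ↑v := by
  classical
  have huvV : (u : V) ≠ (v : V) := fun h => huv (Subtype.ext h)
  haveI : Fintype H.verts := H.verts.toFinite.fintype
  have part1 : ∀ F : Finset (Sym2 V), CutsBetween G ↑u ↑v F →
      ∃ F' : Finset (Sym2 H.verts), CutsBetween H.coe u v F' ∧
        F'.image (Sym2.map (Subtype.val : H.verts → V)) ⊆ F := by
    intro F hF
    refine ⟨Finset.univ.filter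
      (fun e => e ∈ H.coe.edgeSet ∧ Sym2.map Subtype.val e ∈ F), ⟨?_, ?_⟩, ?_⟩
    · intro e he
      simp only [Finset.coe_filter, Set.mem_setOf_eq] at he
      exact he.2.1
    · intro hreach
      apply hF.2
      refine hreach.map ⟨Subtype.val, ?_⟩
      intro x y hxy
      rw [deleteEdges_adj] at hxy ⊢
      refine ⟨H.adj_sub (by simpa using hxy.1), fun hmem => hxy.2 ?_⟩
      refine Finset.mem_coe.mpr (Finset.mem_filter.mpr ⟨Finset.mem_univ _, ?_, ?_⟩)
      · exact hxy.1
      · rwa [Sym2.map_pair_eq]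
    · intro e he
      rw [Finset.mem_image] at he
      obtain ⟨e', he', rfl⟩ := he
      exact (Finset.mem_filter.mp he').2.2
  refine ⟨part1, ?_⟩
  have hSGne : Set.Nonempty {n | ∃ F : Finset (Sym2 V), CutsBetween G ↑u ↑v F ∧ F.card = n} := by
    refine ⟨(G.edgeSet.toFinite.toFinset).card, G.edgeSet.toFinite.toFinset, ⟨?_, ?_⟩, rfl⟩
    · rw [Set.Finite.coe_toFinset]
    · rw [Set.Finite.coe_toFinset, deleteEdges_edgeSet, sdiff_self]
      rw [reachable_bot]
      exact huvV
  have hSHne : Set.Nonempty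
      {n | ∃ F : Finset (Sym2 H.verts), CutsBetween H.coe u v F ∧ F.card = n} := by
    refine ⟨(H.coe.edgeSet.toFinite.toFinset).card, H.coe.edgeSet.toFinite.toFinset,
      ⟨?_, ?_⟩, rfl⟩
    · rw [Set.Finite.coe_toFinset]
    · rw [Set.Finite.coe_toFinset, deleteEdges_edgeSet, sdiff_self]
      rw [reachable_bot]
      exact huv
  have hle1 : lam H.coe u v ≤ lam G ↑u ↑v := by
    obtain ⟨F, hF, hcard⟩ := Nat.sInf_mem hSGne
    obtain ⟨F', hF', himg⟩ := part1 F hF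
    have h1 : lam H.coe u v ≤ F'.card := Nat.sInf_le ⟨F', hF', rfl⟩
    have h2 : F'.card ≤ F.card := by
      rw [← Finset.card_image_of_injective F' (Sym2.map.injective Subtype.val_injective)]
      exact Finset.card_le_card himg
    exact le_trans h1 (h2.trans_eq hcard)
  have hle2 : lam G ↑u ↑v ≤ lam H.coe u v := by
    obtain ⟨R', hR', hcard⟩ := Nat.sInf_mem hSHne
    have hcut : CutsBetween G ↑u ↑v (R'.image (Sym2.map (Subtype.val : H.verts → V))) := by
      constructor
      · intro e he
        simp only [Finset.coe_image, Set.mem_image, Finset.mem_coe] at he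
        obtain ⟨e', he', rfl⟩ := he
        have hmem := hR'.1 (Finset.mem_coe.mpr he')
        induction e' with
        | _ x y =>
          rw [Sym2.map_pair_eq]
          rw [mem_edgeSet] at hmem ⊢
          exact H.adj_sub (by simpa using hmem)
      · intro hr
        obtain ⟨w0⟩ := hr
        have hp : w0.bypass.IsPath := w0.bypass_isPath
        have hedges : ∀ e ∈ w0.bypass.edges,
            e ∈ G.edgeSet \ ↑(R'.image (Sym2.map (Subtype.val : H.verts → V))) := by
          intro e he
          have h1 := w0.bypass.edges_subset_edgeSet he
          rwa [edgeSet_deleteEdges] at h1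
        have hp' : (w0.bypass.transfer G (fun e he => (hedges e he).1)).IsPath :=
          hp.transfer _
        have hsub : (w0.bypass.transfer G (fun e he => (hedges e he).1)).toSubgraph ≤ H :=
          path_le_block hH u.2 v.2 _ hp'
        have hreach := reach_del H (↑R') _ hsub u.2 v.2 ?_
        · apply hR'.2
          convert hreach using 1 <;> exact Subtype.ext rfl
        · intro e he e' he' heq
          rw [Walk.edges_transfer] at he
          apply (hedges e he).2
          rw [Finset.mem_coe, Finset.mem_image]
          exact ⟨e', Finset.mem_coe.mp he', heq⟩
    refine le_trans (Nat.sInf_le ⟨_, hcut, rfl⟩) ?_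
    rw [Finset.card_image_of_injective _ (Sym2.map.injective Subtype.val_injective)]
    exact le_of_eq hcard
  exact le_antisymm hle1 hle2
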